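/- If every element of a subshift is periodic, then the subshift is finite: if S ⊆ Q^{ℤ²} is closed and shift-invariant and every c ∈ S has a finite shift orbit (equivalently, the stabilizer { v ∈ ℤ² : σ_v(c) = c } has finite index in ℤ²), then S is a finite set. -/

import Mathlib

open Set

/-- A configuration assigns a state to each cell of the plane. -/
abbrev Config (Q : Type*) : Type _ := (ℤ × ℤ) → Q

/-- The shift by a vector `v`: `σ_v c = fun x => c (x + v)`. -/
def shiftC {Q : Type*} (v : ℤ × ℤ) (c : Config Q) : Config Q := fun x => c (x + v)

/-- The pattern `P` with (finite) domain `V` appears in `c` at translate `t`. -/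
def AppearsAt {Q : Type*} (c : Config Q) (V : Finset (ℤ × ℤ)) (P : (ℤ × ℤ) → Q)
    (t : ℤ × ℤ) : Prop :=
  ∀ x ∈ V, c (x + t) = P x

/-- The pattern `P` with (finite) domain `V` appears in `c`. -/
def Appears {Q : Type*} (c : Config Q) (V : Finset (ℤ × ℤ)) (P : (ℤ × ℤ) → Q) : Prop :=
  ∃ t : ℤ × ℤ, AppearsAt c V P t

/-- The pattern preorder: `x ≼ y` iff every pattern appearing in `x` appears in `y`. -/
def PatLe {Q : Type*} (x y : Config Q) : Prop :=
  ∀ (V : Finset (ℤ × ℤ)) (P : (ℤ × ℤ) → Q), Appears x V P → Appears y V P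

/-- A set of configurations is shift-invariant. -/
def ShiftInvariant {Q : Type*} (S : Set (Config Q)) : Prop :=
  ∀ c ∈ S, ∀ v : ℤ × ℤ, shiftC v c ∈ S

/-- `c` is an isolated point of `S` (in the subspace topology). -/
def IsolatedIn {Q : Type*} [TopologicalSpace Q] (S : Set (Config Q)) (c : Config Q) : Prop :=
  ∃ U : Set (Config Q), IsOpen U ∧ U ∩ S = {c}

/-- The topological derivative: the non-isolated points of `S`. -/
def derivSet {Q : Type*} [TopologicalSpace Q] (S : Set (Config Q)) : Set (Config Q) :=
  {c ∈ S | ¬ IsolatedIn S c}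

/-- Transfinite iteration of the topological derivative (Cantor–Bendixson). -/
noncomputable def CBIter {Q : Type*} [TopologicalSpace Q] (S : Set (Config Q))
    (o : Ordinal) : Set (Config Q) :=
  Ordinal.limitRecOn o S (fun _ ih => derivSet ih)
    (fun o _ ih => ⋂ (β : {β : Ordinal // β < o}), ih β.1 β.2)

/-- The Cantor–Bendixson rank of `c` in `S`: least `λ` with `c ∉ S^{(λ)}`. -/
noncomputable def CBRank {Q : Type*} [TopologicalSpace Q] (S : Set (Config Q))
    (c : Config Q) : Ordinal :=
  sInf {l : Ordinal | c ∉ CBIter S l}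

/-- A configuration is periodic iff its shift orbit is finite (equivalently, its
stabilizer has finite index in `ℤ²`). -/
def IsPeriodic {Q : Type*} (c : Config Q) : Prop :=
  (Set.range fun v : ℤ × ℤ => shiftC v c).Finite

/-- `c` is a tiling for the tile-set with domain `V` and allowed patterns `A`. -/
def IsTiling {Q : Type*} (V : Finset (ℤ × ℤ)) (A : Set ({x // x ∈ V} → Q))
    (c : Config Q) : Prop :=
  ∀ t : ℤ × ℤ, (fun y : {x // x ∈ V} => c (t + y.1)) ∈ A

/-- The set of tilings of a tile-set. -/
def Tilings {Q : Type*} (V : Finset (ℤ × ℤ)) (A : Set ({x // x ∈ V} → Q)) :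
    Set (Config Q) :=
  {c | IsTiling V A c}

namespace Stmt14Aux
variable {Q : Type*}

lemma shiftC_shiftC (v w : ℤ × ℤ) (c : Config Q) :
    shiftC v (shiftC w c) = shiftC (v + w) c := by
  funext x; simp [shiftC, add_assoc]

lemma shiftC_zero (c : Config Q) : shiftC 0 c = c := by
  funext x; simp [shiftC]

def stab (c : Config Q) : AddSubgroup (ℤ × ℤ) where
  carrier := {v | shiftC v c = c}
  zero_mem' := shiftC_zero c
  add_mem' := by
    intro a b ha hb
    simp only [Set.mem_setOf_eq] at *
    rw [← shiftC_shiftC, hb, ha]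
  neg_mem' := by
    intro a ha
    simp only [Set.mem_setOf_eq] at *
    have h : shiftC (-a) (shiftC a c) = shiftC (-a) c := by rw [ha]
    rw [shiftC_shiftC, neg_add_cancel, shiftC_zero] at h
    exact h.symm

lemma stab_apply {c : Config Q} {v : ℤ × ℤ} (h : v ∈ stab c) (x : ℤ × ℤ) :
    c (x + v) = c x := congrFun h x

lemma mem_stab_pair {c : Config Q} {q : ℤ}
    (h1 : ((q, 0) : ℤ × ℤ) ∈ stab c) (h2 : ((0, q) : ℤ × ℤ) ∈ stab c)
    {a b : ℤ} (ha : q ∣ a) (hb : q ∣ b) : ((a, b) : ℤ × ℤ) ∈ stab c := by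
  obtain ⟨s, rfl⟩ := ha; obtain ⟨t, rfl⟩ := hb
  have h := AddSubgroup.add_mem _ (AddSubgroup.zsmul_mem _ h1 s) (AddSubgroup.zsmul_mem _ h2 t)
  have e : s • ((q, 0) : ℤ × ℤ) + t • ((0, q) : ℤ × ℤ) = (q * s, q * t) := by
    simp [Prod.ext_iff, smul_eq_mul, mul_comm]
  rwa [e] at h

lemma exists_pos_period {c : Config Q} (h : IsPeriodic c) (e : ℤ × ℤ) :
    ∃ k : ℤ, 0 < k ∧ k • e ∈ stab c := by
  have hfin := h.to_subtype
  obtain ⟨m, n, hmn, heq⟩ := Finite.exists_ne_map_eq_of_infinite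
    (fun n : ℕ => (⟨shiftC ((n : ℤ) • e) c, ⟨_, rfl⟩⟩ : ↥(Set.range fun v : ℤ × ℤ => shiftC v c)))
  replace heq : shiftC ((m : ℤ) • e) c = shiftC ((n : ℤ) • e) c := congrArg Subtype.val heq
  have key : ∀ a b : ℤ, shiftC (a • e) c = shiftC (b • e) c → (a - b) • e ∈ stab c := by
    intro a b hab
    show shiftC ((a - b) • e) c = c
    have : shiftC ((-b) • e) (shiftC (a • e) c) = shiftC ((-b) • e) (shiftC (b • e) c) := by
      rw [hab]
    rw [shiftC_shiftC, shiftC_shiftC, ← add_smul, ← add_smul, neg_add_cancel, zero_smul,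
      shiftC_zero] at this
    rw [show (a - b) • e = (-b + a) • e by ring_nf, this]
  rcases lt_or_gt_of_ne (show (m : ℤ) ≠ n by exact_mod_cast hmn) with hlt | hlt
  · exact ⟨(n : ℤ) - m, by omega, key _ _ heq.symm⟩
  · exact ⟨(m : ℤ) - n, by omega, key _ _ heq⟩

lemma periodic_axes {c : Config Q} (h : IsPeriodic c) :
    ∃ q : ℤ, 0 < q ∧ ((q, 0) : ℤ × ℤ) ∈ stab c ∧ ((0, q) : ℤ × ℤ) ∈ stab c := by
  obtain ⟨k1, hk1, hm1⟩ := exists_pos_period h (1, 0)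
  obtain ⟨k2, hk2, hm2⟩ := exists_pos_period h (0, 1)
  refine ⟨k1 * k2, mul_pos hk1 hk2, ?_, ?_⟩
  · have := AddSubgroup.zsmul_mem _ hm1 k2
    rw [smul_smul] at this
    have e : (k2 * k1) • ((1, 0) : ℤ × ℤ) = (k1 * k2, 0) := by
      simp [Prod.ext_iff, smul_eq_mul, mul_comm]
    rwa [e] at this
  · have := AddSubgroup.zsmul_mem _ hm2 k1
    rw [smul_smul] at this
    have e : (k1 * k2) • ((0, 1) : ℤ × ℤ) = (0, k1 * k2) := by
      simp [Prod.ext_iff, smul_eq_mul]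
    rwa [e] at this

lemma ultra_pigeon {α β : Type*} (U : Ultrafilter α) (g : α → β)
    (h : (Set.range g).Finite) : ∃ b, {a | g a = b} ∈ U := by
  by_contra hb
  push_neg at hb
  have h1 : ∀ b ∈ Set.range g, {a | g a ≠ b} ∈ U := by
    intro b _
    have := (Ultrafilter.compl_mem_iff_notMem (s := {a | g a = b})).2 (hb b)
    simpa [Set.compl_setOf] using this
  have h2 : (⋂ b ∈ Set.range g, {a | g a ≠ b}) ∈ U := (Filter.biInter_mem h).2 h1
  obtain ⟨a, ha⟩ := U.nonempty_of_mem h2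
  simp only [Set.mem_iInter, Set.mem_setOf_eq] at ha
  exact ha (g a) ⟨a, rfl⟩ rfl

lemma coord (qq y t e : ℤ) (r : ℕ) (hq : 0 < qq) (h1 : 0 ≤ e) (h2 : e < qq)
    (h5 : 0 ≤ y → e ≤ y) (hyr : y.natAbs ≤ r)
    (hcase : (0 ≤ y ∧ t ≤ -(qq + 1)) ∨ (y < 0 ∧ qq + 1 ≤ t))
    (htr : t.natAbs + qq.toNat + 1 ≤ r) :
    (t + (y - e)).natAbs < r := by omega

end Stmt14Aux

open Stmt14Aux Filter Topology

/-- If every element of a subshift is periodic (finite shift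
orbit), then the subshift is finite. -/
theorem stmt14 {Q : Type*} [Fintype Q] [Nonempty Q] [TopologicalSpace Q] [DiscreteTopology Q]
    (S : Set (Config Q)) (hcl : IsClosed S) (hinv : ShiftInvariant S)
    (hper : ∀ c ∈ S, IsPeriodic c) :
    S.Finite := by
  by_contra hS
  have hcomp : IsCompact S := hcl.isCompact
  -- Step A: an accumulation point
  have hacc : ∃ c ∈ S, ∀ W : Finset (ℤ × ℤ), ∃ x ∈ S, x ≠ c ∧ ∀ u ∈ W, x u = c u := by
    by_contra hno
    push_neg at hno
    choose W hW using hno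
    have hUo : ∀ cs : ↥S, IsOpen {x : Config Q | ∀ u ∈ W cs.1 cs.2, x u = cs.1 u} := by
      intro cs
      have he : {x : Config Q | ∀ u ∈ W cs.1 cs.2, x u = cs.1 u}
          = ⋂ u ∈ W cs.1 cs.2, (fun x : Config Q => x u) ⁻¹' {cs.1 u} := by
        ext x; simp
      rw [he]
      exact isOpen_biInter_finset fun u _ =>
        (continuous_apply u).isOpen_preimage _ (isOpen_discrete _)
    have hcover : S ⊆ ⋃ cs : ↥S, {x : Config Q | ∀ u ∈ W cs.1 cs.2, x u = cs.1 u} := by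
      intro x hx
      exact Set.mem_iUnion.2 ⟨⟨x, hx⟩, fun u _ => rfl⟩
    obtain ⟨t, ht⟩ := hcomp.elim_finite_subcover _ hUo hcover
    apply hS
    apply Set.Finite.subset (t.finite_toSet.image Subtype.val)
    intro x hx
    obtain ⟨cs, hcst, hxU⟩ := Set.mem_iUnion₂.1 (ht hx)
    have hxc : x = cs.1 := by
      by_contra hne
      obtain ⟨u, hu, hxu⟩ := hW cs.1 cs.2 x hx hne
      exact hxu (hxU u hu)
    exact ⟨cs, hcst, hxc.symm⟩
  obtain ⟨c, hcS, hacc⟩ := hacc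
  obtain ⟨q, hq0, hq1, hq2⟩ := periodic_axes (hper c hcS)
  -- Step B: defects at minimal distance
  have hdata : ∀ n : ℕ, ∃ (x : Config Q) (y : ℤ × ℤ) (r : ℕ),
      x ∈ S ∧ (∀ t : ℤ × ℤ, t.1.natAbs < r → t.2.natAbs < r → x t = c t) ∧
      x y ≠ c y ∧ y.1.natAbs ≤ r ∧ y.2.natAbs ≤ r ∧ n < r := by
    intro n
    obtain ⟨x, hxS, hxne, hxagr⟩ :=
      hacc (Finset.Icc (-(n : ℤ)) n ×ˢ Finset.Icc (-(n : ℤ)) n)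
    have hxagr' : ∀ u : ℤ × ℤ, u.1.natAbs ≤ n → u.2.natAbs ≤ n → x u = c u := by
      intro u h1 h2
      apply hxagr
      simp only [Finset.mem_product, Finset.mem_Icc]
      omega
    have hD : ∃ a, x a ≠ c a := Function.ne_iff.1 hxne
    set K : Set ℕ := {k | ∃ t : ℤ × ℤ, x t ≠ c t ∧ max t.1.natAbs t.2.natAbs = k} with hK
    have hKne : K.Nonempty := by
      obtain ⟨a, ha⟩ := hD
      exact ⟨_, a, ha, rfl⟩
    obtain ⟨y, hy, hyr⟩ := Nat.sInf_mem hKne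
    refine ⟨x, y, sInf K, hxS, ?_, hy, by omega, by omega, ?_⟩
    · intro t h1 h2
      by_contra ht
      have := Nat.sInf_le (show max t.1.natAbs t.2.natAbs ∈ K from ⟨t, ht, rfl⟩)
      omega
    · by_contra hle
      have h1 : y.1.natAbs ≤ n := by omega
      have h2 : y.2.natAbs ≤ n := by omega
      exact hy (hxagr' y h1 h2)
  choose X Y R hXS hAg hDef hY1 hY2 hRn using hdata
  -- ultrafilter setup
  set U : Ultrafilter ℕ := Ultrafilter.of atTop with hU
  have hUatTop : ∀ {s : Set ℕ}, s ∈ (atTop : Filter ℕ) → s ∈ U :=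
    fun hs => Ultrafilter.of_le atTop hs
  set Wn : ℕ → ℤ × ℤ := fun n => ((Y n).1 % q, (Y n).2 % q) with hWn
  set Ln : ℕ → ℤ × ℤ := fun n => Y n - Wn n with hLn
  have hYWL : ∀ n, Y n = Wn n + Ln n := by
    intro n; simp [hLn]
  have hLd1 : ∀ n, q ∣ (Ln n).1 := by
    intro n
    refine ⟨(Y n).1 / q, ?_⟩
    have := Int.mul_ediv_add_emod (Y n).1 q
    simp only [hLn, hWn, Prod.fst_sub]
    linarith
  have hLd2 : ∀ n, q ∣ (Ln n).2 := by
    intro n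
    refine ⟨(Y n).2 / q, ?_⟩
    have := Int.mul_ediv_add_emod (Y n).2 q
    simp only [hLn, hWn, Prod.snd_sub]
    linarith
  have hLstab : ∀ n, Ln n ∈ stab c := by
    intro n
    have := mem_stab_pair hq1 hq2 (hLd1 n) (hLd2 n)
    simpa using this
  set Zq : ℕ → Config Q := fun n => shiftC (Ln n) (X n) with hZq
  have hZS : ∀ n, Zq n ∈ S := fun n => hinv _ (hXS n) _
  -- pigeonhole on finite data
  set g : ℕ → (ℤ × ℤ) × Q × (Bool × Bool) := fun n =>
    (Wn n, X n (Y n), (decide (0 ≤ (Y n).1), decide (0 ≤ (Y n).2))) with hg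
  have hWbound : ∀ n, 0 ≤ (Wn n).1 ∧ (Wn n).1 < q ∧ 0 ≤ (Wn n).2 ∧ (Wn n).2 < q := by
    intro n
    exact ⟨Int.emod_nonneg _ hq0.ne', Int.emod_lt_of_pos _ hq0,
      Int.emod_nonneg _ hq0.ne', Int.emod_lt_of_pos _ hq0⟩
  have hgfin : (Set.range g).Finite := by
    apply Set.Finite.subset (((Set.finite_Icc ((0 : ℤ), (0 : ℤ)) (q, q))).prod Set.finite_univ)
    rintro _ ⟨n, rfl⟩
    refine ⟨?_, trivial⟩
    obtain ⟨a1, a2, a3, a4⟩ := hWbound n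
    simp only [hWn] at a1 a2 a3 a4
    simp only [hg, hWn, Set.mem_Icc, Prod.le_def]
    constructor <;> constructor <;> omega
  obtain ⟨⟨w, v, ε⟩, hEU⟩ := ultra_pigeon U g hgfin
  -- basic consequences
  obtain ⟨n₀, hn₀⟩ := U.nonempty_of_mem hEU
  simp only [Set.mem_setOf_eq, hg, Prod.mk.injEq] at hn₀
  obtain ⟨hw₀, hv₀, hε₀⟩ := hn₀
  have hcw : c w = c (Y n₀) := by
    rw [← hw₀, hYWL n₀]
    exact (stab_apply (hLstab n₀) (Wn n₀)).symm
  have hvcw : v ≠ c w := by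
    rw [hcw, ← hv₀]
    exact hDef n₀
  -- the limit configuration
  obtain ⟨z, hzS, hzle⟩ := hcomp.ultrafilter_le_nhds (U.map Zq) (by
    rw [Ultrafilter.coe_map]
    refine Filter.le_principal_iff.2 (Filter.mem_map.2 ?_)
    exact Filter.mem_of_superset Filter.univ_mem fun n _ => hZS n)
  have htend : Filter.Tendsto Zq ↑U (𝓝 z) := by
    rwa [Ultrafilter.coe_map] at hzle
  have hpt : ∀ t : ℤ × ℤ, {n | Zq n t = z t} ∈ U := by
    intro t
    have h1 : Filter.Tendsto (fun n => Zq n t) ↑U (𝓝 (z t)) :=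
      ((continuous_apply t).tendsto z).comp htend
    have h2 : ({z t} : Set Q) ∈ 𝓝 (z t) := by
      simp [nhds_discrete]
    have := h1 h2
    exact this
  -- z w = v
  have hzw : z w = v := by
    obtain ⟨n, hnE, hnpt⟩ := U.nonempty_of_mem (Filter.inter_mem hEU (hpt w))
    simp only [Set.mem_setOf_eq, hg, Prod.mk.injEq] at hnE
    obtain ⟨hwn, hvn, -⟩ := hnE
    have : Zq n w = X n (Y n) := by
      show X n (w + Ln n) = X n (Y n)
      rw [← hwn, ← hYWL]
    rw [Set.mem_setOf_eq] at hnpt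
    rw [← hnpt, this, hvn]
  -- half-plane agreement
  have hhalf : ∀ t : ℤ × ℤ,
      ((ε.1 = true → t.1 ≤ -(q + 1)) ∧ (ε.1 = false → q + 1 ≤ t.1)) →
      ((ε.2 = true → t.2 ≤ -(q + 1)) ∧ (ε.2 = false → q + 1 ≤ t.2)) →
      z t = c t := by
    intro t ht1 ht2
    set N : ℕ := t.1.natAbs + t.2.natAbs + q.toNat + 1 with hN
    have hbig : {n : ℕ | N ≤ n} ∈ U := hUatTop (Filter.mem_atTop N)
    obtain ⟨n, ⟨hnE, hnpt⟩, hnN⟩ :=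
      U.nonempty_of_mem (Filter.inter_mem (Filter.inter_mem hEU (hpt t)) hbig)
    simp only [Set.mem_setOf_eq, hg, Prod.mk.injEq] at hnE
    obtain ⟨hwn, -, hεn⟩ := hnE
    rw [Set.mem_setOf_eq] at hnpt hnN
    have hε1 : ε.1 = decide (0 ≤ (Y n).1) := by rw [← hεn]
    have hε2 : ε.2 = decide (0 ≤ (Y n).2) := by rw [← hεn]
    have hmod5 : ∀ yy : ℤ, 0 ≤ yy → yy % q ≤ yy := by
      intro yy hyy
      have h4 := Int.mul_ediv_add_emod yy q
      have h6 : 0 ≤ q * (yy / q) := mul_nonneg hq0.le (Int.ediv_nonneg hyy hq0.le)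
      linarith
    have hcase1 : (0 ≤ (Y n).1 ∧ t.1 ≤ -(q + 1)) ∨ ((Y n).1 < 0 ∧ q + 1 ≤ t.1) := by
      rcases le_or_gt 0 (Y n).1 with hy | hy
      · left
        refine ⟨hy, ht1.1 ?_⟩
        rw [hε1]; simpa using hy
      · right
        refine ⟨hy, ht1.2 ?_⟩
        rw [hε1]; simpa using hy.not_ge
    have hcase2 : (0 ≤ (Y n).2 ∧ t.2 ≤ -(q + 1)) ∨ ((Y n).2 < 0 ∧ q + 1 ≤ t.2) := by
      rcases le_or_gt 0 (Y n).2 with hy | hy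
      · left
        refine ⟨hy, ht2.1 ?_⟩
        rw [hε2]; simpa using hy
      · right
        refine ⟨hy, ht2.2 ?_⟩
        rw [hε2]; simpa using hy.not_ge
    have hkey1 : (t.1 + (Ln n).1).natAbs < R n := by
      have := coord q (Y n).1 t.1 ((Y n).1 % q) (R n) hq0
        (Int.emod_nonneg _ hq0.ne') (Int.emod_lt_of_pos _ hq0)
        (hmod5 _) (hY1 n) hcase1 (by have := hRn n; omega)
      simpa [hLn, hWn] using this
    have hkey2 : (t.2 + (Ln n).2).natAbs < R n := by
      have := coord q (Y n).2 t.2 ((Y n).2 % q) (R n) hq0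
        (Int.emod_nonneg _ hq0.ne') (Int.emod_lt_of_pos _ hq0)
        (hmod5 _) (hY2 n) hcase2 (by have := hRn n; omega)
      simpa [hLn, hWn] using this
    have hZqt : Zq n t = c t := by
      show X n (t + Ln n) = c t
      rw [hAg n (t + Ln n) (by simpa using hkey1) (by simpa using hkey2)]
      exact stab_apply (hLstab n) t
    rw [← hnpt, hZqt]
  -- common period of z and c
  obtain ⟨p, hp0, hp1, hp2⟩ := periodic_axes (hper z hzS)
  set m : ℤ := q * p with hm
  have hm1 : 1 ≤ m := by nlinarith
  have hqm : q ∣ m := ⟨p, rfl⟩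
  have hpm : p ∣ m := ⟨q, mul_comm q p⟩
  -- z = c
  have hzc : z = c := by
    funext x
    set s1 : ℤ := if ε.1 then 1 else -1 with hs1
    set s2 : ℤ := if ε.2 then 1 else -1 with hs2
    set k : ℤ := (x.1.natAbs : ℤ) + x.2.natAbs + q + 1 with hk
    have hk0 : 0 ≤ k := by positivity
    have hkm : k ≤ k * m := le_mul_of_one_le_right hk0 hm1
    set vec : ℤ × ℤ := (-(s1 * k * m), -(s2 * k * m)) with hvec
    have hvz : vec ∈ stab z :=
      mem_stab_pair hp1 hp2 ((hpm.mul_left (s1 * k)).neg_right) ((hpm.mul_left (s2 * k)).neg_right)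
    have hvc : vec ∈ stab c :=
      mem_stab_pair hq1 hq2 ((hqm.mul_left (s1 * k)).neg_right) ((hqm.mul_left (s2 * k)).neg_right)
    have hxv1 : (x + vec).1 = x.1 + -(s1 * k * m) := rfl
    have hxv2 : (x + vec).2 = x.2 + -(s2 * k * m) := rfl
    have hcond1 : (ε.1 = true → (x + vec).1 ≤ -(q + 1)) ∧ (ε.1 = false → q + 1 ≤ (x + vec).1) := by
      cases hb : ε.1
      · refine ⟨fun h => by simp at h, fun _ => ?_⟩
        have hv1 : -(s1 * k * m) = k * m := by rw [hs1]; simp [hb]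
        rw [hxv1, hv1]; omega
      · refine ⟨fun _ => ?_, fun h => by simp at h⟩
        have hv1 : -(s1 * k * m) = -(k * m) := by rw [hs1]; simp [hb]
        rw [hxv1, hv1]; omega
    have hcond2 : (ε.2 = true → (x + vec).2 ≤ -(q + 1)) ∧ (ε.2 = false → q + 1 ≤ (x + vec).2) := by
      cases hb : ε.2
      · refine ⟨fun h => by simp at h, fun _ => ?_⟩
        have hv2 : -(s2 * k * m) = k * m := by rw [hs2]; simp [hb]
        rw [hxv2, hv2]; omega
      · refine ⟨fun _ => ?_, fun h => by simp at h⟩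
        have hv2 : -(s2 * k * m) = -(k * m) := by rw [hs2]; simp [hb]
        rw [hxv2, hv2]; omega
    calc z x = z (x + vec) := (stab_apply hvz x).symm
      _ = c (x + vec) := hhalf (x + vec) hcond1 hcond2
      _ = c x := stab_apply hvc x
  exact hvcw (by rw [← hzw, hzc])
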